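/- If the constraint matrix A of a linear program {z : A z <= b, z >= 0} is totally unimodular and b is an integer vector, then the feasible region {z in R^n : A z <= b, z >= 0} is nonempty if and only if it contains an integer point. -/

import Mathlib

open Matrix

/-- Real cast of the rows of an integer matrix. -/
def Rr {n : ℕ} {ι : Type} (M : Matrix ι (Fin n) ℤ) : ι → Fin n → ℝ :=
  fun i j => (M i j : ℝ)

/-- Span of the rows of constraints tight at `x`. -/
def Vsp {n : ℕ} {ι : Type} (M : Matrix ι (Fin n) ℤ) (c : ι → ℤ) (x : Fin n → ℝ) :
    Submodule ℝ (Fin n → ℝ) :=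
  Submodule.span ℝ (Rr M '' {i | Rr M i ⬝ᵥ x = (c i : ℝ)})

lemma tu_tight_integral {n : ℕ} {ι : Type} [Fintype ι] (M : Matrix ι (Fin n) ℤ)
    (hM : M.IsTotallyUnimodular) (c : ι → ℤ) (x : Fin n → ℝ)
    (hspan : Vsp M c x = ⊤) :
    ∃ z : Fin n → ℤ, (fun j => (z j : ℝ)) = x := by
  classical
  set R : ι → Fin n → ℝ := fun i j => (M i j : ℝ) with hR
  set T : Set ι := {i | R i ⬝ᵥ x = (c i : ℝ)} with hT
  obtain ⟨bs, hbs, hbspan, hbind⟩ := exists_linearIndependent ℝ (R '' T)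
  haveI : Fintype bs := hbind.setFinite.fintype
  have hbtop : Submodule.span ℝ bs = ⊤ := by rw [hbspan]; exact hspan
  let basis : Module.Basis bs ℝ (Fin n → ℝ) :=
    Module.Basis.mk hbind (by rw [Subtype.range_coe]; exact hbtop.ge)
  have hcard : Fintype.card bs = n := by
    have h1 := Module.finrank_eq_card_basis basis
    rw [Module.finrank_fin_fun] at h1
    omega
  let e : Fin n ≃ bs := (Fintype.equivFinOfCardEq hcard).symm
  have hchoose : ∀ k : Fin n, ∃ i : ι, i ∈ T ∧ R i = (e k : Fin n → ℝ) :=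
    fun k => hbs (e k).2
  choose g hgT hgR using hchoose
  set B : Matrix (Fin n) (Fin n) ℤ := M.submatrix g id with hB
  have hBlin : LinearIndependent ℝ (fun k => (B.map (Int.cast : ℤ → ℝ)) k) := by
    have h2 : (fun k => (B.map (Int.cast : ℤ → ℝ)) k) = fun k => ((e k : Fin n → ℝ)) := by
      funext k; rw [← hgR k]; rfl
    rw [h2]
    exact hbind.comp e e.injective
  have hBunitR : IsUnit (B.map (Int.cast : ℤ → ℝ)) :=
    linearIndependent_rows_iff_isUnit.mp hBlin
  have hdetR : IsUnit ((B.map (Int.cast : ℤ → ℝ)).det) :=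
    (isUnit_iff_isUnit_det _).mp hBunitR
  have hdetcast : ((B.det : ℤ) : ℝ) = (B.map (Int.cast : ℤ → ℝ)).det :=
    RingHom.map_det (Int.castRingHom ℝ) B
  have hdetne : B.det ≠ 0 := by
    intro h
    rw [h] at hdetcast
    simp only [Int.cast_zero] at hdetcast
    exact hdetR.ne_zero hdetcast.symm
  have hdetunit : IsUnit B.det := by
    rw [Matrix.isTotallyUnimodular_iff] at hM
    obtain ⟨sg, hsg⟩ := hM n g id
    cases sg with
    | zero => exact absurd hsg.symm (by simpa using hdetne)
    | pos => rw [← hsg]; simp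
    | neg => rw [← hsg]; simp
  haveI := B.invertibleOfIsUnitDet hdetunit
  refine ⟨(⅟B).mulVec (fun k => c (g k)), ?_⟩
  set z : Fin n → ℤ := (⅟B).mulVec (fun k => c (g k)) with hz
  have hBz : B.mulVec z = fun k => c (g k) := by
    rw [hz, mulVec_mulVec, mul_invOf_self, one_mulVec]
  apply Matrix.mulVec_injective_iff_isUnit.mpr hBunitR
  funext k
  have hlhs : (B.map (Int.cast : ℤ → ℝ)).mulVec (fun j => (z j : ℝ)) k
      = ((B.mulVec z k : ℤ) : ℝ) := by
    simp only [Matrix.mulVec, dotProduct, Matrix.map_apply]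
    push_cast
    rfl
  rw [hlhs, hBz]
  have hrhs : (B.map (Int.cast : ℤ → ℝ)).mulVec x k = R (g k) ⬝ᵥ x := rfl
  rw [hrhs, hgT k]

lemma tu_key {n : ℕ} {ι : Type} [Fintype ι] (M : Matrix ι (Fin n) ℤ)
    (hM : M.IsTotallyUnimodular)
    (hker : ∀ u : Fin n → ℝ, u ≠ 0 → ∃ i, Rr M i ⬝ᵥ u ≠ 0)
    (c : ι → ℤ) (d : ℕ) :
    ∀ x : Fin n → ℝ,
      (∀ i, Rr M i ⬝ᵥ x ≤ (c i : ℝ)) →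
      n ≤ d + Module.finrank ℝ (Vsp M c x) →
      ∃ z : Fin n → ℤ, ∀ i, M.mulVec z i ≤ c i := by
  classical
  have hbase : ∀ x : Fin n → ℝ,
      (∀ i, Rr M i ⬝ᵥ x ≤ (c i : ℝ)) → Vsp M c x = ⊤ →
      ∃ z : Fin n → ℤ, ∀ i, M.mulVec z i ≤ c i := by
    intro x hx hsp
    obtain ⟨z, hz⟩ := tu_tight_integral M hM c x hsp
    refine ⟨z, fun i => ?_⟩
    have h1 : ((M.mulVec z i : ℤ) : ℝ) = Rr M i ⬝ᵥ x := by
      rw [← hz]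
      simp only [Matrix.mulVec, dotProduct, Rr]
      push_cast
      rfl
    have h2 : ((M.mulVec z i : ℤ) : ℝ) ≤ ((c i : ℤ) : ℝ) := by rw [h1]; exact hx i
    exact_mod_cast h2
  induction d with
  | zero =>
    intro x hx hrank
    apply hbase x hx
    apply Submodule.eq_top_of_finrank_eq
    have hle := Submodule.finrank_le (Vsp M c x)
    rw [Module.finrank_fin_fun] at hle ⊢
    omega
  | succ d ih =>
    intro x hx hrank
    by_cases hsp : Vsp M c x = ⊤
    · exact hbase x hx hsp
    · obtain ⟨φ, hφ0, hφbot⟩ :=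
        Submodule.exists_dual_map_eq_bot_of_lt_top (p := Vsp M c x)
          (lt_top_iff_ne_top.mpr hsp) inferInstance
      set u : Fin n → ℝ := fun j => φ (fun j' => if j = j' then 1 else 0) with hu
      have hφu : ∀ v : Fin n → ℝ, φ v = v ⬝ᵥ u := by
        intro v
        rw [LinearMap.pi_apply_eq_sum_univ φ v]
        simp [dotProduct, hu, smul_eq_mul]
      have hune : u ≠ 0 := by
        intro h
        apply hφ0
        apply LinearMap.ext
        intro v
        rw [LinearMap.zero_apply, hφu v, h, dotProduct_zero]
      have huV : ∀ v ∈ Vsp M c x, v ⬝ᵥ u = 0 := by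
        intro v hv
        rw [← hφu]
        have hm : φ v ∈ (Vsp M c x).map φ := Submodule.mem_map_of_mem hv
        rwa [hφbot, Submodule.mem_bot] at hm
      obtain ⟨i₁, hi₁⟩ := hker u hune
      obtain ⟨u', hu'V, i₁', hi₁'⟩ :
          ∃ u' : Fin n → ℝ, (∀ v ∈ Vsp M c x, v ⬝ᵥ u' = 0) ∧ ∃ i, 0 < Rr M i ⬝ᵥ u' := by
        rcases lt_or_gt_of_ne hi₁ with h | h
        · refine ⟨-u, fun v hv => ?_, i₁, ?_⟩
          · rw [dotProduct_neg, huV v hv, neg_zero]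
          · rw [dotProduct_neg]; linarith
        · exact ⟨u, huV, i₁, h⟩
      set S : Finset ι := Finset.univ.filter (fun i => 0 < Rr M i ⬝ᵥ u') with hS
      have hSne : S.Nonempty := ⟨i₁', by simp [hS, hi₁']⟩
      set f : ι → ℝ := fun i => ((c i : ℝ) - Rr M i ⬝ᵥ x) / (Rr M i ⬝ᵥ u') with hf
      set t : ℝ := S.inf' hSne f with ht
      have ht0 : 0 ≤ t := by
        apply Finset.le_inf'
        intro i hi
        have hpos : 0 < Rr M i ⬝ᵥ u' := by simpa [hS] using hi
        exact div_nonneg (by linarith [hx i]) hpos.le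
      obtain ⟨i₀, hi₀S, hi₀⟩ := S.exists_mem_eq_inf' hSne f
      have hd₀ : 0 < Rr M i₀ ⬝ᵥ u' := by simpa [hS] using hi₀S
      set x' : Fin n → ℝ := x + t • u' with hx'def
      have hdot : ∀ v : Fin n → ℝ, v ⬝ᵥ x' = v ⬝ᵥ x + t * (v ⬝ᵥ u') := by
        intro v
        simp [hx'def, dotProduct_add, dotProduct_smul, smul_eq_mul]
      have hx' : ∀ i, Rr M i ⬝ᵥ x' ≤ (c i : ℝ) := by
        intro i
        rw [hdot]
        by_cases hiS : i ∈ S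
        · have hpos : 0 < Rr M i ⬝ᵥ u' := by simpa [hS] using hiS
          have hle : t ≤ f i := Finset.inf'_le f hiS
          rw [hf] at hle
          have h2 : t * (Rr M i ⬝ᵥ u') ≤ (c i : ℝ) - Rr M i ⬝ᵥ x :=
            (le_div_iff₀ hpos).mp hle
          linarith
        · have hnp : Rr M i ⬝ᵥ u' ≤ 0 := by
            by_contra h
            exact hiS (by simp only [hS, Finset.mem_filter, Finset.mem_univ, true_and]; linarith)
          have h3 : t * (Rr M i ⬝ᵥ u') ≤ 0 := mul_nonpos_iff.mpr (Or.inl ⟨ht0, hnp⟩)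
          linarith [hx i]
      have htight : ∀ i ∈ {i | Rr M i ⬝ᵥ x = (c i : ℝ)}, Rr M i ⬝ᵥ x' = (c i : ℝ) := by
        intro i hi
        rw [hdot, hu'V (Rr M i) (Submodule.subset_span (Set.mem_image_of_mem (Rr M) hi)),
          mul_zero, add_zero]
        exact hi
      have hi₀tight : Rr M i₀ ⬝ᵥ x' = (c i₀ : ℝ) := by
        rw [hdot, ht, hi₀]
        have h4 : f i₀ * (Rr M i₀ ⬝ᵥ u') = (c i₀ : ℝ) - Rr M i₀ ⬝ᵥ x := by
          rw [hf]
          exact div_mul_cancel₀ _ hd₀.ne'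
        linarith
      have hi₀notV : Rr M i₀ ∉ Vsp M c x := fun h => by
        have h5 := hu'V (Rr M i₀) h
        linarith
      have hVV' : Vsp M c x < Vsp M c x' := by
        have hle : Vsp M c x ≤ Vsp M c x' := Submodule.span_mono (Set.image_mono htight)
        refine lt_of_le_of_ne hle (fun h => hi₀notV ?_)
        rw [h]
        exact Submodule.subset_span (Set.mem_image_of_mem (Rr M) hi₀tight)
      have hfr : Module.finrank ℝ (Vsp M c x) < Module.finrank ℝ (Vsp M c x') :=
        Submodule.finrank_lt_finrank_of_lt hVV'
      exact ih x' hx' (by omega)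

/-- If `A` is totally unimodular and `b` integral, then
`{z : A z ≤ b, z ≥ 0}` is nonempty iff it contains an integer point. -/
theorem stmt_2 {m n : ℕ} (A : Matrix (Fin m) (Fin n) ℤ)
    (hTU : A.IsTotallyUnimodular) (b : Fin m → ℤ) :
    (∃ z : Fin n → ℝ, (∀ j, 0 ≤ z j) ∧
        ∀ i, (A.map (Int.cast : ℤ → ℝ)).mulVec z i ≤ (b i : ℝ)) ↔
    (∃ z : Fin n → ℤ, (∀ j, 0 ≤ z j) ∧ ∀ i, A.mulVec z i ≤ b i) := by
  constructor
  · rintro ⟨x, hx0, hxA⟩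
    classical
    set M : Matrix (Fin m ⊕ Fin n) (Fin n) ℤ := fromRows A (-1) with hMdef
    set c : Fin m ⊕ Fin n → ℤ := Sum.elim b 0 with hcdef
    have hMTU : M.IsTotallyUnimodular := by
      apply (Matrix.fromRows_isTotallyUnimodular_iff_rows ?_).mpr hTU
      intro _ i
      refine ⟨i, SignType.neg, ?_⟩
      ext j
      rcases eq_or_ne j i with rfl | h
      · simp [Matrix.neg_apply, Matrix.one_apply, Pi.single_apply]
      · simp [Matrix.neg_apply, Matrix.one_apply, Pi.single_apply, h, h.symm]
    have hrow : ∀ j : Fin n, ∀ v : Fin n → ℝ, Rr M (Sum.inr j) ⬝ᵥ v = -(v j) := by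
      intro j v
      simp only [Rr, hMdef, fromRows_apply_inr, Matrix.neg_apply, Matrix.one_apply, dotProduct]
      rw [Finset.sum_eq_single j]
      · simp
      · intro k _ hk
        simp [Ne.symm hk]
      · simp
    have hker : ∀ u : Fin n → ℝ, u ≠ 0 → ∃ i, Rr M i ⬝ᵥ u ≠ 0 := by
      intro u hu
      obtain ⟨j, hj⟩ := Function.ne_iff.mp hu
      exact ⟨Sum.inr j, by rw [hrow]; simpa using hj⟩
    have hfeas : ∀ i, Rr M i ⬝ᵥ x ≤ (c i : ℝ) := by
      intro i
      cases i with
      | inl i => exact hxA i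
      | inr j =>
        rw [hrow]
        simp only [hcdef, Sum.elim_inr, Pi.zero_apply, Int.cast_zero]
        linarith [hx0 j]
    obtain ⟨z, hz⟩ := tu_key M hMTU hker c n x hfeas (Nat.le_add_right n _)
    refine ⟨z, fun j => ?_, fun i => ?_⟩
    · have h1 := hz (Sum.inr j)
      have h2 : M.mulVec z (Sum.inr j) = -(z j) := by
        simp only [hMdef, Matrix.mulVec, dotProduct, fromRows_apply_inr, Matrix.neg_apply,
          Matrix.one_apply]
        rw [Finset.sum_eq_single j]
        · simp
        · intro k _ hk
          simp [Ne.symm hk]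
        · simp
      rw [h2] at h1
      simp only [hcdef, Sum.elim_inr, Pi.zero_apply] at h1
      linarith
    · have h1 := hz (Sum.inl i)
      simpa [hMdef, hcdef, Matrix.mulVec, dotProduct] using h1
  · rintro ⟨z, hz0, hzA⟩
    refine ⟨fun j => (z j : ℝ), fun j => ?_, fun i => ?_⟩
    · show (0 : ℝ) ≤ (z j : ℝ)
      exact_mod_cast hz0 j
    have h1 : (A.map (Int.cast : ℤ → ℝ)).mulVec (fun j => (z j : ℝ)) i
        = ((A.mulVec z i : ℤ) : ℝ) := by
      simp only [Matrix.mulVec, dotProduct, Matrix.map_apply]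
      push_cast
      rfl
    rw [h1]
    exact_mod_cast hzA i
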